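/- arXiv:2406.01462 — 7 statements merged into one kernel-verified Lean document; each statement's English description precedes it below -/
import Mathlib

section
/- Suppose π̂ is a policy that maximizes π ↦ E_{x∼ρ}[Σ_y π(y|x)·r̂(x,y)] − β·E_{x∼ρ}[KL(π(·|x)‖π_ref(·|x))] over all policies, for some reward model r̂ : X × Y → ℝ, and π* maximizes the analogous objective J defined with the true reward r*. Then J(π*) − J(π̂) ≤ E_{x∼ρ}[ Σ_{y¹} Σ_{y²} π*(y¹|x)·π̂(y²|x)·( r*(x,y¹) − r̂(x,y¹) − r*(x,y²) + r̂(x,y²) ) ]. -/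
open scoped BigOperators

/-- `p` is a probability distribution on the finite type `Y`. -/
def IsDist {Y : Type*} [Fintype Y] (p : Y → ℝ) : Prop :=
  (∀ y, 0 ≤ p y) ∧ ∑ y, p y = 1

/-- A policy assigns a probability distribution on responses to every prompt. -/
def IsPolicy {X Y : Type*} [Fintype Y] (π : X → Y → ℝ) : Prop :=
  ∀ x, IsDist (π x)

open Classical in
/-- KL divergence between distributions on a finite type, with the conventions
`0 · log 0 = 0` and `KL(p‖q) = +∞` if `p(y) > 0` while `q(y) = 0` for some `y`. -/
noncomputable def klE {Y : Type*} [Fintype Y] (p q : Y → ℝ) : EReal :=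
  if ∀ y, q y = 0 → p y = 0 then ((∑ y, p y * Real.log (p y / q y) : ℝ) : EReal)
  else ⊤

/-- The KL-regularized objective
`J(π) = E_{x∼ρ}[Σ_y π(y|x)·r(x,y)] − β·E_{x∼ρ}[KL(π(·|x)‖π_ref(·|x))]`. -/
noncomputable def Jobj {X Y : Type*} [Fintype X] [Fintype Y]
    (ρ : X → ℝ) (πref : X → Y → ℝ) (r : X → Y → ℝ) (β : ℝ) (π : X → Y → ℝ) : EReal :=
  ((∑ x, ρ x * ∑ y, π x y * r x y : ℝ) : EReal)
    - (β : EReal) * ∑ x, (ρ x : EReal) * klE (π x) (πref x)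

lemma klE_self {Y : Type*} [Fintype Y] (p : Y → ℝ) : klE p p = 0 := by
  unfold klE
  rw [if_pos (fun y h => h)]
  norm_cast
  apply Finset.sum_eq_zero
  intro y _
  rcases eq_or_ne (p y) 0 with h | h
  · simp [h]
  · rw [div_self h, Real.log_one, mul_zero]

lemma klE_ne_bot {Y : Type*} [Fintype Y] (p q : Y → ℝ) : klE p q ≠ ⊥ := by
  unfold klE
  split
  · exact EReal.coe_ne_bot _
  · exact bot_lt_top.ne'

lemma term_ne_bot {Y : Type*} [Fintype Y] {c : ℝ} (hc : 0 ≤ c) (p q : Y → ℝ) :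
    (c : EReal) * klE p q ≠ ⊥ := by
  unfold klE
  split
  · rw [← EReal.coe_mul]; exact EReal.coe_ne_bot _
  · rcases hc.eq_or_lt with h0 | h0
    · rw [← h0]; simp
    · rw [EReal.coe_mul_top_of_pos h0]; exact bot_lt_top.ne'

/-- The KL penalty term of the objective is never `⊥`. -/
lemma Kterm_ne_bot {X Y : Type*} [Fintype X] [Fintype Y]
    {ρ : X → ℝ} (hρ : ∀ x, 0 ≤ ρ x) (πref π : X → Y → ℝ) :
    (∑ x, (ρ x : EReal) * klE (π x) (πref x)) ≠ ⊥ := by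
  apply Finset.sum_induction (fun x => (ρ x : EReal) * klE (π x) (πref x)) (fun z => z ≠ ⊥)
  · intro a b ha hb
    rw [Ne, EReal.add_eq_bot_iff]
    tauto
  · exact EReal.coe_ne_bot 0
  · intro x _
    exact term_ne_bot (hρ x) _ _

/-- Objective decomposition: if `π̂` maximizes the KL-regularized objective for the
reward model `r̂` over all policies, and `π*` maximizes the objective `J` for the true
reward `r*`, then `J(π*) − J(π̂)` is bounded by the expected relative reward error. -/
theorem objective_decomposition {X Y : Type*} [Fintype X] [Fintype Y]
    (ρ : X → ℝ) (πref : X → Y → ℝ) (rstar rhat : X → Y → ℝ) (β : ℝ)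
    (hβ : 0 < β) (hρ : IsDist ρ) (href : IsPolicy πref)
    (πstar πhat : X → Y → ℝ)
    (hstarPol : IsPolicy πstar) (hhatPol : IsPolicy πhat)
    (hstar : ∀ π, IsPolicy π → Jobj ρ πref rstar β π ≤ Jobj ρ πref rstar β πstar)
    (hhat : ∀ π, IsPolicy π → Jobj ρ πref rhat β π ≤ Jobj ρ πref rhat β πhat) :
    Jobj ρ πref rstar β πstar - Jobj ρ πref rstar β πhat ≤
      ((∑ x, ρ x * ∑ y1, ∑ y2, πstar x y1 * πhat x y2 *
        (rstar x y1 - rhat x y1 - rstar x y2 + rhat x y2) : ℝ) : EReal) := by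
  -- the objective at the reference policy is a real number
  have hJref : ∀ r : X → Y → ℝ,
      Jobj ρ πref r β πref = ((∑ x, ρ x * ∑ y, πref x y * r x y : ℝ) : EReal) := by
    intro r
    unfold Jobj
    simp [klE_self]
  -- the KL penalty of each maximizer is a real number
  have hK : ∀ π : X → Y → ℝ,
      (∀ r : X × Y → Unit, True) → -- dummy
      ((((∑ x, ρ x * ∑ y, πref x y * rstar x y : ℝ) : EReal) ≤ Jobj ρ πref rstar β π) ∨
       (((∑ x, ρ x * ∑ y, πref x y * rhat x y : ℝ) : EReal) ≤ Jobj ρ πref rhat β π)) →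
      ∃ c : ℝ, (∑ x, (ρ x : EReal) * klE (π x) (πref x)) = (c : EReal) := by
    intro π _ hge
    set K := ∑ x, (ρ x : EReal) * klE (π x) (πref x) with hKdef
    have hne : K ≠ ⊥ := Kterm_ne_bot hρ.1 πref π
    have hnt : K ≠ ⊤ := by
      intro htop
      rcases hge with hge | hge <;>
      · rw [Jobj, ← hKdef, htop, EReal.coe_mul_top_of_pos hβ, EReal.sub_top] at hge
        exact EReal.coe_ne_bot _ (le_bot_iff.mp hge)
    exact ⟨K.toReal, (EReal.coe_toReal hnt hne).symm⟩
  obtain ⟨cs, hcs⟩ := hK πstar (fun _ => trivial)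
    (Or.inl (by rw [← hJref rstar]; exact hstar πref href))
  obtain ⟨ch, hch⟩ := hK πhat (fun _ => trivial)
    (Or.inr (by rw [← hJref rhat]; exact hhat πref href))
  -- rewrite objectives as real numbers
  have hJ : ∀ (r : X → Y → ℝ) (π : X → Y → ℝ) (c : ℝ),
      (∑ x, (ρ x : EReal) * klE (π x) (πref x)) = (c : EReal) →
      Jobj ρ πref r β π = ((∑ x, ρ x * ∑ y, π x y * r x y - β * c : ℝ) : EReal) := by
    intro r π c hc
    rw [Jobj, hc, ← EReal.coe_mul, ← EReal.coe_sub]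
  rw [hJ rstar πstar cs hcs, hJ rstar πhat ch hch, ← EReal.coe_sub, EReal.coe_le_coe_iff]
  -- optimality of π̂ for r̂, in real form
  have hopt : (∑ x, ρ x * ∑ y, πstar x y * rhat x y) - β * cs ≤
      (∑ x, ρ x * ∑ y, πhat x y * rhat x y) - β * ch := by
    have := hhat πstar hstarPol
    rw [hJ rhat πstar cs hcs, hJ rhat πhat ch hch, EReal.coe_le_coe_iff] at this
    exact this
  -- rewrite the double-sum bound
  have key : ∀ x, (∑ y1, ∑ y2, πstar x y1 * πhat x y2 *
        (rstar x y1 - rhat x y1 - rstar x y2 + rhat x y2))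
      = ((∑ y, πstar x y * rstar x y) - (∑ y, πstar x y * rhat x y))
        - ((∑ y, πhat x y * rstar x y) - (∑ y, πhat x y * rhat x y)) := by
    intro x
    have hs := (hstarPol x).2
    have hh := (hhatPol x).2
    calc ∑ y1, ∑ y2, πstar x y1 * πhat x y2 *
          (rstar x y1 - rhat x y1 - rstar x y2 + rhat x y2)
        = ∑ y1, (πstar x y1 * (rstar x y1 - rhat x y1) * (∑ y2, πhat x y2)
            - πstar x y1 * (∑ y2, πhat x y2 * (rstar x y2 - rhat x y2))) := by
          refine Finset.sum_congr rfl fun y1 _ => ?_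
          rw [Finset.mul_sum, Finset.mul_sum, ← Finset.sum_sub_distrib]
          exact Finset.sum_congr rfl fun y2 _ => by ring
      _ = (∑ y1, πstar x y1 * (rstar x y1 - rhat x y1))
            - (∑ y1, πstar x y1) * (∑ y2, πhat x y2 * (rstar x y2 - rhat x y2)) := by
          rw [Finset.sum_sub_distrib, ← Finset.sum_mul, ← Finset.sum_mul, hh, mul_one]
      _ = _ := by
          rw [hs, one_mul]
          have e1 : ∑ y, πstar x y * (rstar x y - rhat x y)
              = ∑ y, πstar x y * rstar x y - ∑ y, πstar x y * rhat x y := by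
            rw [← Finset.sum_sub_distrib]
            exact Finset.sum_congr rfl fun y _ => by ring
          have e2 : ∑ y, πhat x y * (rstar x y - rhat x y)
              = ∑ y, πhat x y * rstar x y - ∑ y, πhat x y * rhat x y := by
            rw [← Finset.sum_sub_distrib]
            exact Finset.sum_congr rfl fun y _ => by ring
          rw [e1, e2]
  have hD : (∑ x, ρ x * ∑ y1, ∑ y2, πstar x y1 * πhat x y2 *
        (rstar x y1 - rhat x y1 - rstar x y2 + rhat x y2))
      = ((∑ x, ρ x * ∑ y, πstar x y * rstar x y) - (∑ x, ρ x * ∑ y, πstar x y * rhat x y))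
        - ((∑ x, ρ x * ∑ y, πhat x y * rstar x y)
            - (∑ x, ρ x * ∑ y, πhat x y * rhat x y)) := by
    rw [← Finset.sum_sub_distrib, ← Finset.sum_sub_distrib, ← Finset.sum_sub_distrib]
    refine Finset.sum_congr rfl fun x _ => ?_
    rw [key x]; ring
  linarith [hD, hopt]
end

section
/- Let Y = {y₁, y₂, y₃}, π_ref(y₁) = π_ref(y₂) = 1/2, π_ref(y₃) = 0, let β > 0 and let p ∈ [0,1] be the preference probability p*(y₁ ≻ y₂) (with p*(y₂ ≻ y₁) = 1 − p and p*(y ≻ y) = 1/2). Define the population IPO loss ℓ(π) = Σ_{y¹,y²} π_ref(y¹)π_ref(y²)·E_{I∼Bernoulli(p*(y¹≻y²))}[( log( π(y¹)·π_ref(y²) / (π(y²)·π_ref(y¹)) ) − I/β )²]. Then among the minimizers of ℓ over distributions π on Y with π(y₁) > 0 and π(y₂) > 0 there exists a policy π with π(y₃) > 0; any such π satisfies KL(π‖π_ref) = +∞ and hence J(π) = −∞. -/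
open scoped BigOperators

/-- Promptless KL-regularized objective `J(π) = Σ_y π(y)·r(y) − β·KL(π‖π_ref)`;
in particular `J(π) = −∞` when `KL(π‖π_ref) = +∞`. -/
noncomputable def Jb {Y : Type*} [Fintype Y]
    (r : Y → ℝ) (β : ℝ) (πref π : Y → ℝ) : EReal :=
  ((∑ y, π y * r y : ℝ) : EReal) - (β : EReal) * klE π πref

/-- The population IPO loss
`ℓ(π) = Σ_{y¹,y²} π_ref(y¹)π_ref(y²)·E_{I∼Bernoulli(p*(y¹≻y²))}[(h_π(y¹,y²) − I/β)²]`,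
where `h_π(y¹,y²) = log(π(y¹)·π_ref(y²)/(π(y²)·π_ref(y¹)))` and the Bernoulli
expectation is written out explicitly. -/
noncomputable def ipoLoss {Y : Type*} [Fintype Y]
    (β : ℝ) (πref : Y → ℝ) (pst : Y → Y → ℝ) (π : Y → ℝ) : ℝ :=
  ∑ y1, ∑ y2, πref y1 * πref y2 *
    (pst y1 y2 * (Real.log (π y1 * πref y2 / (π y2 * πref y1)) - 1 / β) ^ 2 +
      (1 - pst y1 y2) * (Real.log (π y1 * πref y2 / (π y2 * πref y1))) ^ 2)

private lemma ipo_loss_eq (πref : Fin 3 → ℝ)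
    (h1 : πref 0 = 1 / 2) (h2 : πref 1 = 1 / 2) (h3 : πref 2 = 0)
    (β : ℝ) (p : ℝ)
    (pst : Fin 3 → Fin 3 → ℝ)
    (hpst01 : pst 0 1 = p) (hpst10 : pst 1 0 = 1 - p)
    (hpstdiag : ∀ y, pst y y = 1 / 2)
    (π : Fin 3 → ℝ) (hπ0 : 0 < π 0) (hπ1 : 0 < π 1) :
    ipoLoss β πref pst π =
      1 / (4 * β ^ 2) + (1 / 4) *
        (2 * (Real.log (π 0 / π 1)) ^ 2
          + 2 * (1 - 2 * p) * Real.log (π 0 / π 1) / β + 1 / β ^ 2) := by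
  have l0 : π 0 * (π 0)⁻¹ = 1 := mul_inv_cancel₀ hπ0.ne'
  have l1 : π 1 * (π 1)⁻¹ = 1 := mul_inv_cancel₀ hπ1.ne'
  have linv : Real.log ((π 0)⁻¹ * π 1) = -Real.log (π 0 * (π 1)⁻¹) := by
    rw [← Real.log_inv, mul_inv, inv_inv]
  simp only [ipoLoss, Fin.sum_univ_three, h3, hpst01, hpst10,
    hpstdiag, h1, h2, Real.log_one, mul_zero, zero_mul, zero_add, add_zero, div_eq_mul_inv,
    mul_inv, l0, l1, linv]
  ring_nf
  simp only [l0, l1, linv, Real.log_one]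
  ring

/-- Failure of IPO under partial coverage: with `π_ref` uniform on `{y₁, y₂}` and
`π_ref(y₃) = 0`, among the minimizers of the population IPO loss over distributions
with `π(y₁) > 0` and `π(y₂) > 0` there is one with `π(y₃) > 0`; any such minimizer has
`KL(π‖π_ref) = +∞` and hence `J(π) = −∞`. -/
theorem ipo_fails_partial_coverage
    (πref : Fin 3 → ℝ) (href : IsDist πref)
    (h1 : πref 0 = 1 / 2) (h2 : πref 1 = 1 / 2) (h3 : πref 2 = 0)
    (β : ℝ) (hβ : 0 < β) (p : ℝ) (hp0 : 0 ≤ p) (hp1 : p ≤ 1)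
    (pst : Fin 3 → Fin 3 → ℝ)
    (hpst01 : pst 0 1 = p) (hpst10 : pst 1 0 = 1 - p)
    (hpstdiag : ∀ y, pst y y = 1 / 2)
    (rstar : Fin 3 → ℝ) :
    (∃ π : Fin 3 → ℝ, IsDist π ∧ 0 < π 0 ∧ 0 < π 1 ∧
        (∀ π' : Fin 3 → ℝ, IsDist π' → 0 < π' 0 → 0 < π' 1 →
          ipoLoss β πref pst π ≤ ipoLoss β πref pst π') ∧
        0 < π 2) ∧
      (∀ π : Fin 3 → ℝ, IsDist π → 0 < π 0 → 0 < π 1 →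
        (∀ π' : Fin 3 → ℝ, IsDist π' → 0 < π' 0 → 0 < π' 1 →
          ipoLoss β πref pst π ≤ ipoLoss β πref pst π') →
        0 < π 2 → klE π πref = ⊤ ∧ Jb rstar β πref π = ⊥) := by
  set t : ℝ := (2 * p - 1) / (2 * β) with ht
  have hβ' : β ≠ 0 := hβ.ne'
  have hd : (1 - 2 * p) / β = -(2 * t) := by
    rw [ht]; field_simp; ring
  have key : ∀ s : ℝ,
      2 * t ^ 2 + 2 * (1 - 2 * p) * t / β ≤ 2 * s ^ 2 + 2 * (1 - 2 * p) * s / β := by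
    intro s
    have e : ∀ x : ℝ, 2 * (1 - 2 * p) * x / β = -(4 * t) * x := by
      intro x
      rw [show 2 * (1 - 2 * p) * x / β = (1 - 2 * p) / β * (2 * x) by ring, hd]; ring
    rw [e t, e s]
    nlinarith [sq_nonneg (s - t)]
  -- the candidate minimizer
  set c : ℝ := Real.exp t with hc
  have hcpos : 0 < c := Real.exp_pos t
  set q : ℝ := 1 / (2 * (1 + c)) with hq
  have hqpos : 0 < q := by rw [hq]; positivity
  set π : Fin 3 → ℝ := ![c * q, q, 1 / 2] with hπ
  have hπ0 : 0 < π 0 := by simp [hπ]; positivity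
  have hπ1 : 0 < π 1 := by simpa [hπ] using hqpos
  have hπ2 : 0 < π 2 := by rw [hπ]; show (0:ℝ) < 1 / 2; norm_num
  have hsum : IsDist π := by
    constructor
    · intro y
      fin_cases y
      · exact hπ0.le
      · exact hπ1.le
      · exact hπ2.le
    · simp only [Fin.sum_univ_three, hπ]
      simp only [Matrix.cons_val_zero, Matrix.cons_val_one, Matrix.head_cons,
        Matrix.cons_val_two, Matrix.tail_cons]
      rw [hq]
      have : (1 : ℝ) + c ≠ 0 := by positivity
      field_simp
      ring
  have hlog : Real.log (π 0 / π 1) = t := by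
    have : π 0 / π 1 = c := by
      show c * q / q = c
      exact mul_div_cancel_right₀ c hqpos.ne'
    rw [this, hc, Real.log_exp]
  have hmin : ∀ π' : Fin 3 → ℝ, IsDist π' → 0 < π' 0 → 0 < π' 1 →
      ipoLoss β πref pst π ≤ ipoLoss β πref pst π' := by
    intro π' _ h0' h1'
    rw [ipo_loss_eq πref h1 h2 h3 β p pst hpst01 hpst10 hpstdiag π hπ0 hπ1,
      ipo_loss_eq πref h1 h2 h3 β p pst hpst01 hpst10 hpstdiag π' h0' h1', hlog]
    have := key (Real.log (π' 0 / π' 1))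
    linarith
  have hkl : ∀ ρ : Fin 3 → ℝ, 0 < ρ 2 → klE ρ πref = ⊤ := by
    intro ρ hρ2
    rw [klE, if_neg]
    push_neg
    exact ⟨2, h3, hρ2.ne'⟩
  refine ⟨⟨π, hsum, hπ0, hπ1, hmin, hπ2⟩, ?_⟩
  intro ρ _ _ _ _ hρ2
  refine ⟨hkl ρ hρ2, ?_⟩
  rw [Jb, hkl ρ hρ2, EReal.mul_top_of_pos (by exact_mod_cast hβ), EReal.sub_top]
end

section
/- Let β > 0, let r*, r̂ : X × Y → ℝ satisfy |r*(x,y)| ≤ R′ and |r̂(x,y)| ≤ R′ for all x, y, and let π* and π_rlhf be the Gibbs policies π*(y|x) ∝ π_ref(y|x)·exp(r*(x,y)/β) and π_rlhf(y|x) ∝ π_ref(y|x)·exp(r̂(x,y)/β). Assume local KL-ball coverage with constant C at radius 2R′/β: every policy π with E_{x∼ρ}[KL(π(·|x)‖π_ref(·|x))] ≤ 2R′/β satisfies π(y|x) ≤ C·π_ref(y|x) for all x with ρ(x) > 0 and all y. Assume reward accuracy E_{x∼ρ}[ Σ_y π_ref(y|x)·( r*(x,y) − r̂(x,y) )² ]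 ≤ ε. Then J(π*) − J(π_rlhf) ≤ 2·C·√ε. -/
open scoped BigOperators

lemma ecoe_sum {α : Type*} (s : Finset α) (f : α → ℝ) :
    ((∑ a ∈ s, f a : ℝ) : EReal) = ∑ a ∈ s, ((f a : ℝ) : EReal) := by
  induction s using Finset.cons_induction with
  | empty => simp
  | cons a s h ih => rw [Finset.sum_cons, Finset.sum_cons, EReal.coe_add, ih]

lemma gibbs_facts {Y : Type*} [Fintype Y] (q : Y → ℝ) (hq : IsDist q)
    (r : Y → ℝ) (β R' : ℝ) (hβ : 0 < β) (hr : ∀ y, |r y| ≤ R')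
    (Zv : ℝ) (hZv : Zv = ∑ y, q y * Real.exp (r y / β))
    (p : Y → ℝ) (hp : ∀ y, p y = q y * Real.exp (r y / β) / Zv) :
    0 < Zv ∧ IsDist p ∧
      klE p q = ((((∑ y, p y * r y) / β - Real.log Zv : ℝ)) : EReal) ∧
      (∑ y, p y * r y) / β - Real.log Zv ≤ 2 * R' / β := by
  obtain ⟨hq0, hq1⟩ := hq
  have hexp_le : Real.exp (-R' / β) ≤ Zv := by
    rw [hZv]
    calc Real.exp (-R' / β) = ∑ y, q y * Real.exp (-R' / β) := by
          rw [← Finset.sum_mul, hq1, one_mul]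
      _ ≤ ∑ y, q y * Real.exp (r y / β) := by
          refine Finset.sum_le_sum fun y _ => ?_
          refine mul_le_mul_of_nonneg_left ?_ (hq0 y)
          exact Real.exp_le_exp.mpr (div_le_div_of_nonneg_right (neg_le_of_abs_le (hr y)) hβ.le)
  have hZpos : 0 < Zv := lt_of_lt_of_le (Real.exp_pos _) hexp_le
  have hp0 : ∀ y, 0 ≤ p y := fun y => by
    rw [hp]; exact div_nonneg (mul_nonneg (hq0 y) (Real.exp_pos _).le) hZpos.le
  have hp1 : ∑ y, p y = 1 := by
    simp only [hp, ← Finset.sum_div, ← hZv, div_self hZpos.ne']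
  have hsupp : ∀ y, q y = 0 → p y = 0 := fun y h => by simp [hp, h]
  have hkl : klE p q = ((((∑ y, p y * r y) / β - Real.log Zv : ℝ)) : EReal) := by
    rw [klE, if_pos hsupp]
    norm_cast
    have hterm : ∀ y, p y * Real.log (p y / q y) = p y * (r y / β - Real.log Zv) := by
      intro y
      rcases eq_or_lt_of_le (hq0 y) with h | h
      · rw [hsupp y h.symm]; ring
      · have hpy : p y / q y = Real.exp (r y / β) / Zv := by
          rw [hp]
          field_simp
        rw [hpy, Real.log_div (Real.exp_ne_zero _) hZpos.ne', Real.log_exp]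
    rw [Finset.sum_congr rfl fun y _ => hterm y]
    have hterm2 : ∀ y : Y, p y * (r y / β - Real.log Zv)
        = p y * r y / β - Real.log Zv * p y := fun y => by ring
    rw [Finset.sum_congr rfl fun y _ => hterm2 y, Finset.sum_sub_distrib,
      ← Finset.sum_div, ← Finset.mul_sum, hp1, mul_one]
  refine ⟨hZpos, ⟨hp0, hp1⟩, hkl, ?_⟩
  have h1 : ∑ y, p y * r y ≤ R' := by
    calc ∑ y, p y * r y ≤ ∑ y, p y * R' :=
          Finset.sum_le_sum fun y _ =>
            mul_le_mul_of_nonneg_left (le_of_abs_le (hr y)) (hp0 y)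
      _ = R' := by rw [← Finset.sum_mul, hp1, one_mul]
  have h2 : -R' / β ≤ Real.log Zv := (Real.le_log_iff_exp_le hZpos).mpr hexp_le
  have h3 : (∑ y, p y * r y) / β ≤ R' / β := div_le_div_of_nonneg_right h1 hβ.le
  have h4 : 2 * R' / β = R' / β - (-R' / β) := by ring
  linarith

lemma gibbs_opt {Y : Type*} [Fintype Y] (q p : Y → ℝ)
    (hp0 : ∀ y, 0 ≤ p y) (hp1 : ∑ y, p y = 1)
    (r r' : Y → ℝ) (β : ℝ) (hβ : 0 < β)
    (Zp Z' : ℝ) (hZp : 0 < Zp) (hZ' : Z' = ∑ y, q y * Real.exp (r' y / β))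
    (hpz : ∀ y, p y * Zp = q y * Real.exp (r y / β)) :
    β * Real.log Zp - β * Real.log Z' ≤ ∑ y, p y * (r y - r' y) := by
  set t : Y → ℝ := fun y => (r' y - r y) / β with ht
  set m : ℝ := ∑ y, p y * t y with hm
  have key : Zp * Real.exp m ≤ Z' := by
    have hZ'2 : Z' = ∑ y, (p y * Zp) * Real.exp (t y) := by
      rw [hZ']
      refine Finset.sum_congr rfl fun y _ => ?_
      rw [hpz y, mul_assoc, ← Real.exp_add, ht]
      congr 2
      field_simp
      ring
    rw [hZ'2]
    calc Zp * Real.exp m = ∑ y, (p y * Zp) * (Real.exp m * (1 + (t y - m))) := by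
          have : ∑ y, p y * (1 + (t y - m)) = 1 := by
            have e1 : ∀ y : Y, p y * (1 + (t y - m)) = p y + (p y * t y - m * p y) :=
              fun y => by ring
            rw [Finset.sum_congr rfl fun y _ => e1 y, Finset.sum_add_distrib,
              Finset.sum_sub_distrib, ← Finset.mul_sum, hp1, ← hm]
            ring
          calc Zp * Real.exp m = Zp * Real.exp m * ∑ y, p y * (1 + (t y - m)) := by
                rw [this, mul_one]
            _ = ∑ y, (p y * Zp) * (Real.exp m * (1 + (t y - m))) := by
                rw [Finset.mul_sum]
                exact Finset.sum_congr rfl fun y _ => by ring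
      _ ≤ ∑ y, (p y * Zp) * Real.exp (t y) := by
          refine Finset.sum_le_sum fun y _ => ?_
          refine mul_le_mul_of_nonneg_left ?_ (mul_nonneg (hp0 y) hZp.le)
          have h1 : (t y - m) + 1 ≤ Real.exp (t y - m) := Real.add_one_le_exp _
          have h2 : Real.exp (t y) = Real.exp m * Real.exp (t y - m) := by
            rw [← Real.exp_add]; ring_nf
          rw [h2]
          nlinarith [Real.exp_pos m, Real.exp_pos (t y - m)]
  have hZ'pos : 0 < Z' := lt_of_lt_of_le (by positivity) key
  have hlog : Real.log Zp + m ≤ Real.log Z' := by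
    have := Real.log_le_log (by positivity) key
    rwa [Real.log_mul hZp.ne' (Real.exp_ne_zero _), Real.log_exp] at this
  have hβm : β * m = ∑ y, p y * (r' y - r y) := by
    rw [hm, Finset.mul_sum]
    refine Finset.sum_congr rfl fun y _ => ?_
    have hty : t y * β = r' y - r y := div_mul_cancel₀ _ hβ.ne'
    calc β * (p y * t y) = p y * (t y * β) := by ring
      _ = p y * (r' y - r y) := by rw [hty]
  have hsum : ∑ y, p y * (r y - r' y) = -(β * m) := by
    have e : ∀ y : Y, p y * (r y - r' y) = -(p y * (r' y - r y)) := fun y => by ring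
    rw [Finset.sum_congr rfl fun y _ => e y, Finset.sum_neg_distrib, ← hβm]
  have := mul_le_mul_of_nonneg_left hlog hβ.le
  rw [mul_add] at this
  linarith

/-- RLHF under partial (local KL-ball) coverage: if both rewards are bounded by `R'`,
`π*` and `π_rlhf` are the corresponding Gibbs policies, local KL-ball coverage with
constant `C` holds at radius `2R'/β`, and the learned reward is `ε`-accurate in
distribution, then `J(π*) − J(π_rlhf) ≤ 2C√ε`. -/
theorem rlhf_partial_coverage {X Y : Type*} [Fintype X] [Fintype Y]
    (ρ : X → ℝ) (πref : X → Y → ℝ) (rstar rhat : X → Y → ℝ) (β R' : ℝ)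
    (hβ : 0 < β) (hρ : IsDist ρ) (href : IsPolicy πref)
    (hrstar : ∀ x y, |rstar x y| ≤ R') (hrhat : ∀ x y, |rhat x y| ≤ R')
    (Zstar : X → ℝ) (hZstar : ∀ x, Zstar x = ∑ y, πref x y * Real.exp (rstar x y / β))
    (πstar : X → Y → ℝ)
    (hπstar : ∀ x y, πstar x y = πref x y * Real.exp (rstar x y / β) / Zstar x)
    (Z : X → ℝ) (hZ : ∀ x, Z x = ∑ y, πref x y * Real.exp (rhat x y / β))
    (πrlhf : X → Y → ℝ)
    (hπrlhf : ∀ x y, πrlhf x y = πref x y * Real.exp (rhat x y / β) / Z x)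
    (C : ℝ)
    (hcov : ∀ π : X → Y → ℝ, IsPolicy π →
      (∑ x, (ρ x : EReal) * klE (π x) (πref x)) ≤ ((2 * R' / β : ℝ) : EReal) →
      ∀ x, 0 < ρ x → ∀ y, π x y ≤ C * πref x y)
    (ε : ℝ)
    (hacc : ∑ x, ρ x * ∑ y, πref x y * (rstar x y - rhat x y) ^ 2 ≤ ε) :
    Jobj ρ πref rstar β πstar - Jobj ρ πref rstar β πrlhf ≤
      ((2 * C * Real.sqrt ε : ℝ) : EReal) := by
  obtain ⟨hρ0, hρ1⟩ := hρ
  have Hs := fun x => gibbs_facts (πref x) (href x) (fun y => rstar x y) β R' hβ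
    (fun y => hrstar x y) (Zstar x) (hZstar x) (πstar x) (fun y => hπstar x y)
  have Hr := fun x => gibbs_facts (πref x) (href x) (fun y => rhat x y) β R' hβ
    (fun y => hrhat x y) (Z x) (hZ x) (πrlhf x) (fun y => hπrlhf x y)
  have hZs_pos : ∀ x, 0 < Zstar x := fun x => (Hs x).1
  have hZ_pos : ∀ x, 0 < Z x := fun x => (Hr x).1
  have hπs_pol : IsPolicy πstar := fun x => (Hs x).2.1
  have hπr_pol : IsPolicy πrlhf := fun x => (Hr x).2.1
  have hklS : ∀ x, klE (πstar x) (πref x)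
      = ((((∑ y, πstar x y * rstar x y) / β - Real.log (Zstar x) : ℝ)) : EReal) :=
    fun x => (Hs x).2.2.1
  have hklR : ∀ x, klE (πrlhf x) (πref x)
      = ((((∑ y, πrlhf x y * rhat x y) / β - Real.log (Z x) : ℝ)) : EReal) :=
    fun x => (Hr x).2.2.1
  have hklSb : ∀ x, (∑ y, πstar x y * rstar x y) / β - Real.log (Zstar x) ≤ 2 * R' / β :=
    fun x => (Hs x).2.2.2
  have hklRb : ∀ x, (∑ y, πrlhf x y * rhat x y) / β - Real.log (Z x) ≤ 2 * R' / β :=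
    fun x => (Hr x).2.2.2
  have hsumS : (∑ x, (ρ x : EReal) * klE (πstar x) (πref x))
      = ((∑ x, ρ x * ((∑ y, πstar x y * rstar x y) / β - Real.log (Zstar x)) : ℝ) : EReal) := by
    rw [ecoe_sum]
    exact Finset.sum_congr rfl fun x _ => by rw [hklS x, ← EReal.coe_mul]
  have hsumR : (∑ x, (ρ x : EReal) * klE (πrlhf x) (πref x))
      = ((∑ x, ρ x * ((∑ y, πrlhf x y * rhat x y) / β - Real.log (Z x)) : ℝ) : EReal) := by
    rw [ecoe_sum]
    exact Finset.sum_congr rfl fun x _ => by rw [hklR x, ← EReal.coe_mul]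
  have hbudget : ∀ g : X → ℝ, (∀ x, g x ≤ 2 * R' / β) → ∑ x, ρ x * g x ≤ 2 * R' / β := by
    intro g hg
    calc ∑ x, ρ x * g x ≤ ∑ x, ρ x * (2 * R' / β) :=
          Finset.sum_le_sum fun x _ => mul_le_mul_of_nonneg_left (hg x) (hρ0 x)
      _ = 2 * R' / β := by rw [← Finset.sum_mul, hρ1, one_mul]
  have hcovS : ∀ x, 0 < ρ x → ∀ y, πstar x y ≤ C * πref x y := by
    refine hcov πstar hπs_pol ?_
    rw [hsumS]
    exact_mod_cast hbudget _ hklSb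
  have hcovR : ∀ x, 0 < ρ x → ∀ y, πrlhf x y ≤ C * πref x y := by
    refine hcov πrlhf hπr_pol ?_
    rw [hsumR]
    exact_mod_cast hbudget _ hklRb
  -- C ≥ 1
  obtain ⟨x₀, hx₀⟩ : ∃ x, 0 < ρ x := by
    by_contra h
    push_neg at h
    have : (∑ x, ρ x) ≤ 0 := Finset.sum_nonpos fun x _ => h x
    rw [hρ1] at this; linarith
  obtain ⟨y₀, hy₀⟩ : ∃ y, 0 < πref x₀ y := by
    by_contra h
    push_neg at h
    have : (∑ y, πref x₀ y) ≤ 0 := Finset.sum_nonpos fun y _ => h y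
    rw [(href x₀).2] at this; linarith
  have hR' : 0 ≤ R' := le_trans (abs_nonneg _) (hrstar x₀ y₀)
  have hklref : ∀ x, klE (πref x) (πref x) = ((0 : ℝ) : EReal) := by
    intro x
    rw [klE, if_pos (fun y h => h)]
    norm_cast
    refine Finset.sum_eq_zero fun y _ => ?_
    rcases eq_or_ne (πref x y) 0 with h | h
    · simp [h]
    · rw [div_self h, Real.log_one, mul_zero]
  have hC1 : 1 ≤ C := by
    have h0 : (∑ x, (ρ x : EReal) * klE (πref x) (πref x)) ≤ ((2 * R' / β : ℝ) : EReal) := by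
      have he : ∀ x ∈ Finset.univ, (ρ x : EReal) * klE (πref x) (πref x) = ((0 : ℝ) : EReal) :=
        fun x _ => by rw [hklref x, ← EReal.coe_mul, mul_zero]
      rw [Finset.sum_congr rfl he]
      simp only [EReal.coe_zero, Finset.sum_const, smul_zero]
      exact_mod_cast (by positivity : (0 : ℝ) ≤ 2 * R' / β)
    have hcref := hcov πref href h0 x₀ hx₀ y₀
    nlinarith
  -- rewrite Jobj values as real coercions
  have hJs : Jobj ρ πref rstar β πstar = ((∑ x, ρ x * ∑ y, πstar x y * rstar x y
      - β * ∑ x, ρ x * ((∑ y, πstar x y * rstar x y) / β - Real.log (Zstar x)) : ℝ) : EReal) := by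
    rw [Jobj, hsumS, ← EReal.coe_mul, ← EReal.coe_sub]
  have hJr : Jobj ρ πref rstar β πrlhf = ((∑ x, ρ x * ∑ y, πrlhf x y * rstar x y
      - β * ∑ x, ρ x * ((∑ y, πrlhf x y * rhat x y) / β - Real.log (Z x)) : ℝ) : EReal) := by
    rw [Jobj, hsumR, ← EReal.coe_mul, ← EReal.coe_sub]
  rw [hJs, hJr, ← EReal.coe_sub, EReal.coe_le_coe_iff]
  -- Cauchy–Schwarz step
  have hT0 : 0 ≤ ∑ x, ρ x * ∑ y, πref x y * (rstar x y - rhat x y) ^ 2 :=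
    Finset.sum_nonneg fun x _ => mul_nonneg (hρ0 x)
      (Finset.sum_nonneg fun y _ => mul_nonneg ((href x).1 y) (sq_nonneg _))
  have hε0 : 0 ≤ ε := le_trans hT0 hacc
  have hS0 : 0 ≤ ∑ x, ρ x * ∑ y, πref x y * |rstar x y - rhat x y| :=
    Finset.sum_nonneg fun x _ => mul_nonneg (hρ0 x)
      (Finset.sum_nonneg fun y _ => mul_nonneg ((href x).1 y) (abs_nonneg _))
  have hCS : ∑ x, ρ x * ∑ y, πref x y * |rstar x y - rhat x y| ≤ Real.sqrt ε := by
    have key := Finset.sum_mul_sq_le_sq_mul_sq Finset.univ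
      (fun z : X × Y => Real.sqrt (ρ z.1 * πref z.1 z.2))
      (fun z : X × Y => Real.sqrt (ρ z.1 * πref z.1 z.2) * |rstar z.1 z.2 - rhat z.1 z.2|)
    have h1 : ∑ z : X × Y, Real.sqrt (ρ z.1 * πref z.1 z.2) *
        (Real.sqrt (ρ z.1 * πref z.1 z.2) * |rstar z.1 z.2 - rhat z.1 z.2|)
        = ∑ x, ρ x * ∑ y, πref x y * |rstar x y - rhat x y| := by
      rw [Fintype.sum_prod_type]
      refine Finset.sum_congr rfl fun x _ => ?_
      rw [Finset.mul_sum]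
      refine Finset.sum_congr rfl fun y _ => ?_
      rw [← mul_assoc, Real.mul_self_sqrt (mul_nonneg (hρ0 x) ((href x).1 y))]
      ring
    have h2 : ∑ z : X × Y, Real.sqrt (ρ z.1 * πref z.1 z.2) ^ 2 = 1 := by
      rw [Fintype.sum_prod_type]
      have hx : ∀ x : X, ∑ y, Real.sqrt (ρ x * πref x y) ^ 2 = ρ x := by
        intro x
        have hy : ∀ y : Y, Real.sqrt (ρ x * πref x y) ^ 2 = ρ x * πref x y :=
          fun y => Real.sq_sqrt (mul_nonneg (hρ0 x) ((href x).1 y))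
        rw [Finset.sum_congr rfl fun y _ => hy y, ← Finset.mul_sum, (href x).2, mul_one]
      rw [Finset.sum_congr rfl fun x _ => hx x, hρ1]
    have h3 : ∑ z : X × Y, (Real.sqrt (ρ z.1 * πref z.1 z.2) * |rstar z.1 z.2 - rhat z.1 z.2|) ^ 2
        ≤ ε := by
      have he : ∀ z : X × Y, (Real.sqrt (ρ z.1 * πref z.1 z.2) * |rstar z.1 z.2 - rhat z.1 z.2|) ^ 2
          = ρ z.1 * πref z.1 z.2 * (rstar z.1 z.2 - rhat z.1 z.2) ^ 2 := by
        intro z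
        rw [mul_pow, Real.sq_sqrt (mul_nonneg (hρ0 z.1) ((href z.1).1 z.2)), sq_abs]
      rw [Finset.sum_congr rfl fun z _ => he z, Fintype.sum_prod_type]
      refine le_trans (le_of_eq ?_) hacc
      refine Finset.sum_congr rfl fun x _ => ?_
      rw [Finset.mul_sum]
      exact Finset.sum_congr rfl fun y _ => by ring
    rw [h1, h2, one_mul] at key
    exact (Real.le_sqrt hS0 hε0).mpr (le_trans key h3)
  -- per-prompt bound
  have hperx : ∀ x, 0 < ρ x →
      β * Real.log (Zstar x) - (∑ y, πrlhf x y * rstar x y - ∑ y, πrlhf x y * rhat x y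
        + β * Real.log (Z x)) ≤ 2 * C * ∑ y, πref x y * |rstar x y - rhat x y| := by
    intro x hx
    have hopt := gibbs_opt (πref x) (πstar x) (fun y => (hπs_pol x).1 y) (hπs_pol x).2
      (fun y => rstar x y) (fun y => rhat x y) β hβ (Zstar x) (Z x) (hZs_pos x) (hZ x)
      (fun y => by rw [hπstar x y]; exact div_mul_cancel₀ _ (hZs_pos x).ne')
    have hdiff : ∑ y, πrlhf x y * rstar x y - ∑ y, πrlhf x y * rhat x y
        = ∑ y, πrlhf x y * (rstar x y - rhat x y) := by
      rw [← Finset.sum_sub_distrib]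
      exact Finset.sum_congr rfl fun y _ => by ring
    have hbound : ∑ y, πstar x y * (rstar x y - rhat x y)
        - ∑ y, πrlhf x y * (rstar x y - rhat x y)
        ≤ 2 * C * ∑ y, πref x y * |rstar x y - rhat x y| := by
      rw [← Finset.sum_sub_distrib, Finset.mul_sum]
      refine Finset.sum_le_sum fun y _ => ?_
      have h1 := hcovS x hx y
      have h2 := hcovR x hx y
      have h3 : 0 ≤ πstar x y := (hπs_pol x).1 y
      have h4 : 0 ≤ πrlhf x y := (hπr_pol x).1 y
      have h5 := le_abs_self (rstar x y - rhat x y)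
      have h6 := neg_abs_le (rstar x y - rhat x y)
      nlinarith [abs_nonneg (rstar x y - rhat x y)]
    rw [hdiff]
    linarith
  -- algebraic identity
  have hgen : ∀ a b c : X → ℝ,
      (∑ x, ρ x * a x) - β * (∑ x, ρ x * (a x / β - Real.log (Zstar x)))
        - ((∑ x, ρ x * b x) - β * ∑ x, ρ x * (c x / β - Real.log (Z x)))
      = ∑ x, ρ x * (β * Real.log (Zstar x) - (b x - c x + β * Real.log (Z x))) := by
    intro a b c
    simp only [Finset.mul_sum, ← Finset.sum_sub_distrib]
    refine Finset.sum_congr rfl fun x _ => ?_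
    field_simp
    ring
  have hid : (∑ x, ρ x * ∑ y, πstar x y * rstar x y
      - β * ∑ x, ρ x * ((∑ y, πstar x y * rstar x y) / β - Real.log (Zstar x)))
      - (∑ x, ρ x * ∑ y, πrlhf x y * rstar x y
      - β * ∑ x, ρ x * ((∑ y, πrlhf x y * rhat x y) / β - Real.log (Z x)))
      = ∑ x, ρ x * (β * Real.log (Zstar x) - (∑ y, πrlhf x y * rstar x y
          - ∑ y, πrlhf x y * rhat x y + β * Real.log (Z x))) :=
    hgen (fun x => ∑ y, πstar x y * rstar x y) (fun x => ∑ y, πrlhf x y * rstar x y)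
      (fun x => ∑ y, πrlhf x y * rhat x y)
  rw [hid]
  calc ∑ x, ρ x * (β * Real.log (Zstar x) - (∑ y, πrlhf x y * rstar x y
          - ∑ y, πrlhf x y * rhat x y + β * Real.log (Z x)))
      ≤ ∑ x, ρ x * (2 * C * ∑ y, πref x y * |rstar x y - rhat x y|) := by
        refine Finset.sum_le_sum fun x _ => ?_
        rcases (hρ0 x).eq_or_lt with h | h
        · rw [← h]; simp
        · exact mul_le_mul_of_nonneg_left (hperx x h) (hρ0 x)
    _ = 2 * C * ∑ x, ρ x * ∑ y, πref x y * |rstar x y - rhat x y| := by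
        rw [Finset.mul_sum]
        exact Finset.sum_congr rfl fun x _ => by ring
    _ ≤ 2 * C * Real.sqrt ε := mul_le_mul_of_nonneg_left hCS (by linarith)
end

section
/- For every β > 0, every K > 0 and every ε > 0, there exist a finite response set Y, a probability distribution π_ref on Y with full support, and rewards r*, r̂ : Y → ℝ with r* bounded and nonnegative, such that the in-distribution reward error satisfies Σ_y π_ref(y)·( r̂(y) − r*(y) )² ≤ ε, yet the Gibbs policy π(y) = π_ref(y)·exp(r̂(y)/β)/Z with Z = Σ_y π_ref(y)·exp(r̂(y)/β) has forward KL divergence KL(π_ref‖π) ≥ K. -/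
open scoped BigOperators

theorem aux_tendsto (K β : ℝ) (hK : 0 ≤ K) :
    Filter.Tendsto (fun t : ℝ => Real.exp (-t) * (K + t + 1)) Filter.atTop (nhds 0) := by
  have h1 : Filter.Tendsto (fun s : ℝ => s ^ 1 * Real.exp (-s)) Filter.atTop (nhds 0) :=
    Real.tendsto_pow_mul_exp_neg_atTop_nhds_zero 1
  have h2 : Filter.Tendsto (fun t : ℝ => K + t + 1) Filter.atTop Filter.atTop :=
    Filter.tendsto_atTop_mono (fun t => by simp; linarith) Filter.tendsto_id
  have h3 := h1.comp h2
  have h4 : Filter.Tendsto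
      (fun t : ℝ => Real.exp (K + 1) * ((K + t + 1) ^ 1 * Real.exp (-(K + t + 1))))
      Filter.atTop (nhds (Real.exp (K + 1) * 0)) := h3.const_mul _
  rw [mul_zero] at h4
  refine h4.congr fun t => ?_
  rw [pow_one, show -(K + t + 1) = -(K + 1) + -t by ring, Real.exp_add (-(K+1)) (-t),
    Real.exp_neg (K + 1)]
  field_simp [Real.exp_ne_zero]

/-- DPO can have vacuously large forward KL: for any `β, K, ε > 0` there are a finite
response set, a fully supported reference policy, and rewards `r*` (bounded,
nonnegative) and `r̂` with in-distribution error at most `ε`, such that the Gibbs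
policy of `r̂` has forward KL divergence `KL(π_ref‖π) ≥ K`. -/
theorem dpo_forward_kl_vacuous (β K ε : ℝ) (hβ : 0 < β) (hK : 0 < K) (hε : 0 < ε) :
    ∃ (n : ℕ) (πref rstar rhat : Fin n → ℝ),
      IsDist πref ∧ (∀ y, 0 < πref y) ∧
      (∃ R : ℝ, ∀ y, 0 ≤ rstar y ∧ rstar y ≤ R) ∧
      (∑ y, πref y * (rhat y - rstar y) ^ 2 ≤ ε) ∧
      (K : EReal) ≤ klE πref
        (fun y => πref y * Real.exp (rhat y / β) /
          ∑ y', πref y' * Real.exp (rhat y' / β)) := by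
  -- choose a large parameter t
  have hA := aux_tendsto K β hK.le
  have hB : Filter.Tendsto (fun t : ℝ => Real.exp (-t) * (β * (K + t + 1)) ^ 2)
      Filter.atTop (nhds 0) := by
    have h1 : Filter.Tendsto (fun s : ℝ => s ^ 2 * Real.exp (-s)) Filter.atTop (nhds 0) :=
      Real.tendsto_pow_mul_exp_neg_atTop_nhds_zero 2
    have h2 : Filter.Tendsto (fun t : ℝ => K + t + 1) Filter.atTop Filter.atTop :=
      Filter.tendsto_atTop_mono (fun t => by simp; linarith) Filter.tendsto_id
    have h3 := h1.comp h2
    have h4 : Filter.Tendsto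
        (fun t : ℝ => (β ^ 2 * Real.exp (K + 1)) *
          ((K + t + 1) ^ 2 * Real.exp (-(K + t + 1))))
        Filter.atTop (nhds ((β ^ 2 * Real.exp (K + 1)) * 0)) := h3.const_mul _
    rw [mul_zero] at h4
    refine h4.congr fun t => ?_
    rw [show -(K + t + 1) = -(K + 1) + -t by ring, Real.exp_add (-(K+1)) (-t),
      Real.exp_neg (K + 1)]
    field_simp [Real.exp_ne_zero]
  have hC : Filter.Tendsto (fun t : ℝ => Real.exp (-t)) Filter.atTop (nhds 0) :=
    Real.tendsto_exp_neg_atTop_nhds_zero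
  have e1 : ∀ᶠ t : ℝ in Filter.atTop, Real.exp (-t) * (K + t + 1) < 1 :=
    hA.eventually_lt_const one_pos
  have e2 : ∀ᶠ t : ℝ in Filter.atTop, Real.exp (-t) * (β * (K + t + 1)) ^ 2 < ε :=
    hB.eventually_lt_const hε
  have e3 : ∀ᶠ t : ℝ in Filter.atTop, Real.exp (-t) < 1/2 :=
    hC.eventually_lt_const (by norm_num)
  obtain ⟨t, ⟨⟨h1, hE⟩, ⟨h2, ht0⟩⟩⟩ :=
    ((e1.and e2).and (e3.and (Filter.eventually_ge_atTop (0:ℝ)))).exists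
  set δ : ℝ := Real.exp (-t) with hδdef
  set M : ℝ := β * (K + t + 1) with hMdef
  have hδ0 : 0 < δ := Real.exp_pos _
  have hδhalf : δ < 1/2 := h2
  have h1δ : 0 < 1 - δ := by linarith
  refine ⟨2, ![1 - δ, δ], 0, ![0, M], ?_, ?_, ⟨0, by simp⟩, ?_, ?_⟩
  · constructor
    · intro y; fin_cases y <;> simp <;> linarith
    · simp [Fin.sum_univ_two]
  · intro y; fin_cases y <;> simp <;> linarith
  · rw [Fin.sum_univ_two]
    simp only [Matrix.cons_val_zero, Matrix.cons_val_one, Matrix.head_cons, Pi.zero_apply]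
    have : δ * M ^ 2 ≤ ε := le_of_lt hE
    nlinarith [sq_nonneg M]
  · -- KL bound
    set Z : ℝ := ∑ y' : Fin 2, ![1 - δ, δ] y' * Real.exp (![0, M] y' / β) with hZdef
    have hZ : Z = (1 - δ) + δ * Real.exp (M / β) := by
      rw [hZdef, Fin.sum_univ_two]
      simp [Matrix.cons_val_zero, Matrix.cons_val_one, Matrix.head_cons]
    have hMβ : M / β = K + t + 1 := by
      rw [hMdef]; field_simp
    have hZpos : 0 < Z := by
      rw [hZ]; positivity
    have hZge : δ * Real.exp (M / β) ≤ Z := by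
      rw [hZ]; nlinarith [Real.exp_pos (M / β)]
    have hlogZ : K + 1 ≤ Real.log Z := by
      have : Real.log (δ * Real.exp (M / β)) ≤ Real.log Z :=
        Real.log_le_log (by positivity) hZge
      rw [Real.log_mul (ne_of_gt hδ0) (ne_of_gt (Real.exp_pos _)), hδdef,
        Real.log_exp, Real.log_exp, hMβ] at this
      linarith
    rw [klE, if_pos]
    · rw [EReal.coe_le_coe_iff]
      have hq0 : (![1 - δ, δ] 0 : ℝ) / (![1 - δ, δ] 0 * Real.exp (![0, M] 0 / β) / Z) = Z := by
        simp only [Matrix.cons_val_zero]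
        rw [zero_div, Real.exp_zero, mul_one]
        field_simp
      have hq1 : (![1 - δ, δ] 1 : ℝ) / (![1 - δ, δ] 1 * Real.exp (![0, M] 1 / β) / Z)
          = Z / Real.exp (M / β) := by
        simp only [Matrix.cons_val_one, Matrix.head_cons, Matrix.cons_val_zero]
        rw [eq_div_iff (ne_of_gt (Real.exp_pos _))]
        field_simp
      rw [Fin.sum_univ_two, hq0, hq1,
        Real.log_div (ne_of_gt hZpos) (ne_of_gt (Real.exp_pos _)), Real.log_exp]
      simp only [Matrix.cons_val_zero, Matrix.cons_val_one, Matrix.head_cons]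
      have hδM : δ * (M / β) ≤ 1 := by rw [hMβ]; linarith [h1]
      nlinarith [hlogZ, hδM, hδ0.le, h1δ.le]
    · intro y hy
      have hp : 0 < ![1 - δ, δ] y := by fin_cases y <;> simp <;> linarith
      have hq : 0 < ![1 - δ, δ] y * Real.exp (![0, M] y / β) / Z := by positivity
      exact absurd hy (ne_of_gt hq)
end

section
/- Let μ be a policy and π₁, π₂ policies satisfying the coverage bounds π₁(y|x) ≤ C·μ(y|x) and π₂(y|x) ≤ C·μ(y|x) for all x with ρ(x) > 0 and all y. Then for any function f : X × Y × Y → ℝ, E_{x∼ρ}[ Σ_{y¹,y²} π₁(y¹|x)·π₂(y²|x)·f(x,y¹,y²) ] ≤ C·√( E_{x∼ρ}[ Σ_{y¹,y²} μ(y¹|x)·μ(y²|x)·f(x,y¹,y²)² ] ). -/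
open scoped BigOperators

/-- Coverage-based Cauchy–Schwarz transfer: if `π₁` and `π₂` are covered by `μ` with
constant `C` on the support of `ρ`, then for any `f`,
`E_{x∼ρ}[E_{π₁⊗π₂}[f]] ≤ C·√(E_{x∼ρ}[E_{μ⊗μ}[f²]])`. -/
theorem coverage_cauchy_schwarz {X Y : Type*} [Fintype X] [Fintype Y]
    (ρ : X → ℝ) (μ π1 π2 : X → Y → ℝ) (C : ℝ) (f : X → Y → Y → ℝ)
    (hρ : IsDist ρ) (hμ : IsPolicy μ) (h1 : IsPolicy π1) (h2 : IsPolicy π2)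
    (hcov1 : ∀ x, 0 < ρ x → ∀ y, π1 x y ≤ C * μ x y)
    (hcov2 : ∀ x, 0 < ρ x → ∀ y, π2 x y ≤ C * μ x y) :
    ∑ x, ρ x * ∑ y1, ∑ y2, π1 x y1 * π2 x y2 * f x y1 y2 ≤
      C * Real.sqrt (∑ x, ρ x * ∑ y1, ∑ y2, μ x y1 * μ x y2 * (f x y1 y2) ^ 2) := by
  -- notation
  set G : X → ℝ := fun x => ∑ y1, ∑ y2, μ x y1 * μ x y2 * (f x y1 y2) ^ 2 with hG
  have hGnonneg : ∀ x, 0 ≤ G x := by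
    intro x
    refine Finset.sum_nonneg fun y1 _ => Finset.sum_nonneg fun y2 _ => ?_
    have := (hμ x).1 y1
    have := (hμ x).1 y2
    positivity
  -- C ≥ 1
  have hC1 : (1 : ℝ) ≤ C := by
    obtain ⟨x, hx⟩ : ∃ x, 0 < ρ x := by
      by_contra h
      push_neg at h
      have : ∑ x, ρ x ≤ 0 := Finset.sum_nonpos fun x _ => h x
      linarith [hρ.2]
    calc (1 : ℝ) = ∑ y, π1 x y := (h1 x).2.symm
      _ ≤ ∑ y, C * μ x y := Finset.sum_le_sum fun y _ => hcov1 x hx y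
      _ = C * ∑ y, μ x y := by rw [Finset.mul_sum]
      _ = C := by rw [(hμ x).2, mul_one]
  have hC0 : (0 : ℝ) ≤ C := by linarith
  -- pointwise bound on the support of ρ
  have key : ∀ x, 0 < ρ x →
      (∑ y1, ∑ y2, π1 x y1 * π2 x y2 * f x y1 y2) ≤ C * Real.sqrt (G x) := by
    intro x hx
    have hπnn : ∀ p : Y × Y, 0 ≤ π1 x p.1 * π2 x p.2 := fun p =>
      mul_nonneg ((h1 x).1 p.1) ((h2 x).1 p.2)
    have step1 : (∑ y1, ∑ y2, π1 x y1 * π2 x y2 * f x y1 y2) ≤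
        Real.sqrt (∑ p : Y × Y, π1 x p.1 * π2 x p.2 * (f x p.1 p.2) ^ 2) := by
      have hsum : (∑ y1, ∑ y2, π1 x y1 * π2 x y2 * f x y1 y2) =
          ∑ p : Y × Y, (Real.sqrt (π1 x p.1 * π2 x p.2)) *
            (Real.sqrt (π1 x p.1 * π2 x p.2) * f x p.1 p.2) := by
        rw [Fintype.sum_prod_type]
        refine Finset.sum_congr rfl fun y1 _ => Finset.sum_congr rfl fun y2 _ => ?_
        rw [← mul_assoc, Real.mul_self_sqrt (hπnn (y1, y2))]
      rw [hsum]
      calc ∑ p : Y × Y, (Real.sqrt (π1 x p.1 * π2 x p.2)) *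
            (Real.sqrt (π1 x p.1 * π2 x p.2) * f x p.1 p.2)
          ≤ Real.sqrt (∑ p : Y × Y, (Real.sqrt (π1 x p.1 * π2 x p.2)) ^ 2) *
            Real.sqrt (∑ p : Y × Y, (Real.sqrt (π1 x p.1 * π2 x p.2) * f x p.1 p.2) ^ 2) :=
            Real.sum_mul_le_sqrt_mul_sqrt _ _ _
        _ = Real.sqrt (∑ p : Y × Y, π1 x p.1 * π2 x p.2) *
            Real.sqrt (∑ p : Y × Y, π1 x p.1 * π2 x p.2 * (f x p.1 p.2) ^ 2) := by
            congr 1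
            · congr 1
              exact Finset.sum_congr rfl fun p _ => Real.sq_sqrt (hπnn p)
            · congr 1
              refine Finset.sum_congr rfl fun p _ => ?_
              rw [mul_pow, Real.sq_sqrt (hπnn p)]
        _ = Real.sqrt (∑ p : Y × Y, π1 x p.1 * π2 x p.2 * (f x p.1 p.2) ^ 2) := by
            have : (∑ p : Y × Y, π1 x p.1 * π2 x p.2) = 1 := by
              rw [Fintype.sum_prod_type]
              simp_rw [← Finset.mul_sum, ← Finset.sum_mul]
              rw [(h1 x).2, (h2 x).2, mul_one]
            rw [this, Real.sqrt_one, one_mul]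
    have step2 : (∑ p : Y × Y, π1 x p.1 * π2 x p.2 * (f x p.1 p.2) ^ 2) ≤ C ^ 2 * G x := by
      have : (C ^ 2 * G x) = ∑ p : Y × Y, (C * μ x p.1) * (C * μ x p.2) * (f x p.1 p.2) ^ 2 := by
        show C ^ 2 * (∑ y1, ∑ y2, μ x y1 * μ x y2 * (f x y1 y2) ^ 2) = _
        rw [Fintype.sum_prod_type, Finset.mul_sum]
        refine Finset.sum_congr rfl fun y1 _ => ?_
        rw [Finset.mul_sum]
        exact Finset.sum_congr rfl fun y2 _ => by ring
      rw [this]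
      refine Finset.sum_le_sum fun p _ => ?_
      have h1' := hcov1 x hx p.1
      have h2' := hcov2 x hx p.2
      have hμ1 := mul_nonneg hC0 ((hμ x).1 p.1)
      exact mul_le_mul_of_nonneg_right
        (mul_le_mul h1' h2' ((h2 x).1 p.2) (le_trans ((h1 x).1 p.1) h1')) (sq_nonneg _)
    calc (∑ y1, ∑ y2, π1 x y1 * π2 x y2 * f x y1 y2)
        ≤ Real.sqrt (∑ p : Y × Y, π1 x p.1 * π2 x p.2 * (f x p.1 p.2) ^ 2) := step1
      _ ≤ Real.sqrt (C ^ 2 * G x) := Real.sqrt_le_sqrt step2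
      _ = C * Real.sqrt (G x) := by
          rw [Real.sqrt_mul (sq_nonneg C), Real.sqrt_sq hC0]
  -- assemble
  have main : ∑ x, ρ x * ∑ y1, ∑ y2, π1 x y1 * π2 x y2 * f x y1 y2 ≤
      ∑ x, ρ x * (C * Real.sqrt (G x)) := by
    refine Finset.sum_le_sum fun x _ => ?_
    rcases lt_or_eq_of_le (hρ.1 x) with hx | hx
    · exact mul_le_mul_of_nonneg_left (key x hx) (le_of_lt hx)
    · simp [← hx]
  refine main.trans ?_
  have rewr : ∑ x, ρ x * (C * Real.sqrt (G x)) =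
      C * ∑ x, Real.sqrt (ρ x) * Real.sqrt (ρ x * G x) := by
    rw [Finset.mul_sum]
    refine Finset.sum_congr rfl fun x _ => ?_
    rw [Real.sqrt_mul (hρ.1 x)]
    have h := Real.mul_self_sqrt (hρ.1 x)
    conv_lhs => rw [← h]
    ring
  rw [rewr]
  refine mul_le_mul_of_nonneg_left ?_ hC0
  calc ∑ x, Real.sqrt (ρ x) * Real.sqrt (ρ x * G x)
      ≤ Real.sqrt (∑ x, ρ x) * Real.sqrt (∑ x, ρ x * G x) :=
        Real.sum_sqrt_mul_sqrt_le _ hρ.1 (fun x => mul_nonneg (hρ.1 x) (hGnonneg x))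
    _ = Real.sqrt (∑ x, ρ x * G x) := by rw [hρ.2, Real.sqrt_one, one_mul]
end

section
/- Let β > 0, let r : X × Y → ℝ, and define the Gibbs policy π_r(y|x) = π_ref(y|x)·exp(r(x,y)/β)/Z(x) with Z(x) = Σ_y π_ref(y|x)·exp(r(x,y)/β). Then π_r maximizes π ↦ E_{x∼ρ}[ Σ_y π(y|x)·r(x,y) ] − β·E_{x∼ρ}[ KL(π(·|x)‖π_ref(·|x)) ] over all policies; moreover, for every x with ρ(x) > 0, any maximizer π of this objective satisfies π(·|x) = π_r(·|x). -/
open scoped BigOperators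

/-- Coercion of a finite real sum into `EReal`. -/
lemma ereal_coe_sum {α : Type*} (s : Finset α) (f : α → ℝ) :
    ((∑ i ∈ s, f i : ℝ) : EReal) = ∑ i ∈ s, (f i : EReal) :=
  map_sum (⟨⟨(fun x => (x : EReal)), EReal.coe_zero⟩, EReal.coe_add⟩ : ℝ →+ EReal) f s

/-- Gibbs' inequality, both the weak and strict form, stated with `log (q/p)`. -/
lemma gibbs_aux {Y : Type*} [Fintype Y] (p q : Y → ℝ) (hp : IsDist p) (hq : IsDist q)
    (hAC : ∀ y, q y = 0 → p y = 0) :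
    (∑ y, p y * Real.log (q y / p y) ≤ 0) ∧
      (p ≠ q → ∑ y, p y * Real.log (q y / p y) < 0) := by
  have h1 : ∀ y, p y * Real.log (q y / p y) ≤ q y - p y := by
    intro y
    rcases eq_or_lt_of_le (hp.1 y) with h0 | hpy
    · rw [← h0]
      simpa using hq.1 y
    · have hqy : 0 < q y := (hq.1 y).lt_of_ne' (fun h => absurd (hAC y h) hpy.ne')
      have hlog := Real.log_le_sub_one_of_pos (div_pos hqy hpy)
      have h2 : p y * Real.log (q y / p y) ≤ p y * (q y / p y - 1) :=
        mul_le_mul_of_nonneg_left hlog hpy.le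
      have h3 : p y * (q y / p y - 1) = q y - p y := by field_simp
      linarith
  have hsum : ∑ y, (q y - p y) = 0 := by
    rw [Finset.sum_sub_distrib, hp.2, hq.2, sub_self]
  constructor
  · calc ∑ y, p y * Real.log (q y / p y) ≤ ∑ y, (q y - p y) :=
        Finset.sum_le_sum fun y _ => h1 y
      _ = 0 := hsum
  · intro hne
    obtain ⟨y0, hy0⟩ := Function.ne_iff.mp hne
    have h2 : p y0 * Real.log (q y0 / p y0) < q y0 - p y0 := by
      rcases eq_or_lt_of_le (hp.1 y0) with h0 | hpy
      · have hqy : 0 < q y0 :=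
          (hq.1 y0).lt_of_ne' (fun h => hy0 (h0.symm.trans h.symm))
        rw [← h0]
        simpa using hqy
      · have hqy : 0 < q y0 := (hq.1 y0).lt_of_ne' (fun h => absurd (hAC y0 h) hpy.ne')
        have hne1 : q y0 / p y0 ≠ 1 :=
          fun h => hy0 ((div_eq_one_iff_eq hpy.ne').mp h).symm
        have hlog := Real.log_lt_sub_one_of_pos (div_pos hqy hpy) hne1
        have h2' := mul_lt_mul_of_pos_left hlog hpy
        have h3 : p y0 * (q y0 / p y0 - 1) = q y0 - p y0 := by field_simp
        linarith
    calc ∑ y, p y * Real.log (q y / p y) < ∑ y, (q y - p y) :=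
        Finset.sum_lt_sum (fun y _ => h1 y) ⟨y0, Finset.mem_univ _, h2⟩
      _ = 0 := hsum

lemma kl_flip {Y : Type*} [Fintype Y] (p q : Y → ℝ) :
    ∑ y, p y * Real.log (p y / q y) = -∑ y, p y * Real.log (q y / p y) := by
  rw [← Finset.sum_neg_distrib]
  refine Finset.sum_congr rfl fun y _ => ?_
  rw [show Real.log (p y / q y) = -Real.log (q y / p y) by rw [← Real.log_inv, inv_div]]
  ring

lemma kl_nonneg {Y : Type*} [Fintype Y] (p q : Y → ℝ) (hp : IsDist p) (hq : IsDist q)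
    (hAC : ∀ y, q y = 0 → p y = 0) :
    0 ≤ ∑ y, p y * Real.log (p y / q y) := by
  rw [kl_flip]
  linarith [(gibbs_aux p q hp hq hAC).1]

lemma kl_pos {Y : Type*} [Fintype Y] (p q : Y → ℝ) (hp : IsDist p) (hq : IsDist q)
    (hAC : ∀ y, q y = 0 → p y = 0) (hne : p ≠ q) :
    0 < ∑ y, p y * Real.log (p y / q y) := by
  rw [kl_flip]
  linarith [(gibbs_aux p q hp hq hAC).2 hne]

/-- The Gibbs policy `π_r(y|x) = π_ref(y|x)·exp(r(x,y)/β)/Z(x)` maximizes the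
KL-regularized objective over all policies, and any maximizer agrees with `π_r` on
every prompt `x` with `ρ(x) > 0`. -/
theorem gibbs_maximizes_and_unique {X Y : Type*} [Fintype X] [Fintype Y]
    (ρ : X → ℝ) (πref : X → Y → ℝ) (r : X → Y → ℝ) (β : ℝ)
    (hβ : 0 < β) (hρ : IsDist ρ) (href : IsPolicy πref)
    (Z : X → ℝ) (hZ : ∀ x, Z x = ∑ y, πref x y * Real.exp (r x y / β))
    (πr : X → Y → ℝ)
    (hπr : ∀ x y, πr x y = πref x y * Real.exp (r x y / β) / Z x) :
    (∀ π : X → Y → ℝ, IsPolicy π →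
        Jobj ρ πref r β π ≤ Jobj ρ πref r β πr) ∧
      (∀ π : X → Y → ℝ, IsPolicy π →
        (∀ π' : X → Y → ℝ, IsPolicy π' → Jobj ρ πref r β π' ≤ Jobj ρ πref r β π) →
        ∀ x, 0 < ρ x → ∀ y, π x y = πr x y) := by
  classical
  have hZpos : ∀ x, 0 < Z x := by
    intro x
    rw [hZ]
    have h1 : ∃ y, 0 < πref x y := by
      by_contra h
      push_neg at h
      have hz : ∀ y, πref x y = 0 := fun y => le_antisymm (h y) ((href x).1 y)
      have h2 := (href x).2
      rw [Finset.sum_eq_zero (fun y _ => hz y)] at h2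
      exact zero_ne_one h2
    obtain ⟨y0, hy0⟩ := h1
    refine Finset.sum_pos'
      (fun y _ => mul_nonneg ((href x).1 y) (Real.exp_pos _).le)
      ⟨y0, Finset.mem_univ _, mul_pos hy0 (Real.exp_pos _)⟩
  have hπr_nonneg : ∀ x y, 0 ≤ πr x y := fun x y => by
    rw [hπr]
    exact div_nonneg (mul_nonneg ((href x).1 y) (Real.exp_pos _).le) (hZpos x).le
  have hπr_pol : IsPolicy πr := by
    intro x
    refine ⟨hπr_nonneg x, ?_⟩
    have h1 : ∑ y, πr x y = (∑ y, πref x y * Real.exp (r x y / β)) / Z x := by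
      rw [Finset.sum_div]
      exact Finset.sum_congr rfl fun y _ => hπr x y
    rw [h1, ← hZ, div_self (hZpos x).ne']
  have hπr_zero : ∀ x y, πref x y = 0 ↔ πr x y = 0 := by
    intro x y
    rw [hπr]
    constructor
    · intro h; rw [h]; ring
    · intro h
      rcases div_eq_zero_iff.mp h with h1 | h2
      · rcases mul_eq_zero.mp h1 with h | h
        · exact h
        · exact absurd h (Real.exp_pos _).ne'
      · exact absurd h2 (hZpos x).ne'
  -- the key pointwise identity
  have key : ∀ (x : X) (p : Y → ℝ), IsDist p → (∀ y, πref x y = 0 → p y = 0) →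
      (∑ y, p y * r x y) - β * ∑ y, p y * Real.log (p y / πref x y)
        = β * Real.log (Z x) - β * ∑ y, p y * Real.log (p y / πr x y) := by
    intro x p hp hAC
    have ht : ∀ y, p y * r x y - β * (p y * Real.log (p y / πref x y))
        = p y * (β * Real.log (Z x)) - β * (p y * Real.log (p y / πr x y)) := by
      intro y
      by_cases h0 : p y = 0
      · simp [h0]
      have hrefpos : 0 < πref x y := ((href x).1 y).lt_of_ne' (fun h => h0 (hAC y h))
      have hπrpos : 0 < πr x y :=
        (hπr_nonneg x y).lt_of_ne' (fun h => h0 (hAC y ((hπr_zero x y).mpr h)))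
      have hlogr : Real.log (πr x y) = Real.log (πref x y) + r x y / β - Real.log (Z x) := by
        rw [hπr, Real.log_div (mul_pos hrefpos (Real.exp_pos _)).ne' (hZpos x).ne',
          Real.log_mul hrefpos.ne' (Real.exp_pos _).ne', Real.log_exp]
      rw [Real.log_div h0 hπrpos.ne', Real.log_div h0 hrefpos.ne', hlogr]
      field_simp
      ring
    have hlhs : (∑ y, p y * r x y) - β * ∑ y, p y * Real.log (p y / πref x y)
        = ∑ y, (p y * r x y - β * (p y * Real.log (p y / πref x y))) := by
      rw [Finset.mul_sum, Finset.sum_sub_distrib]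
    have hrhs : ∑ y, (p y * (β * Real.log (Z x)) - β * (p y * Real.log (p y / πr x y)))
        = β * Real.log (Z x) - β * ∑ y, p y * Real.log (p y / πr x y) := by
      rw [Finset.sum_sub_distrib, ← Finset.sum_mul, hp.2, one_mul, ← Finset.mul_sum]
    rw [hlhs, Finset.sum_congr rfl (fun y _ => ht y), hrhs]
  have hklself : ∀ x, ∑ y, πr x y * Real.log (πr x y / πr x y) = 0 := by
    intro x
    refine Finset.sum_eq_zero fun y _ => ?_
    by_cases h : πr x y = 0
    · simp [h]
    · rw [div_self h, Real.log_one, mul_zero]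
  set C : ℝ := ∑ x, ρ x * (β * Real.log (Z x)) with hC
  -- value of the objective for policies that are suitably absolutely continuous
  have hval : ∀ π : X → Y → ℝ, IsPolicy π →
      (∀ x, 0 < ρ x → ∀ y, πref x y = 0 → π x y = 0) →
      Jobj ρ πref r β π = ((∑ x, ρ x * ((∑ y, π x y * r x y) -
        β * (if ∀ y, πref x y = 0 → π x y = 0
          then ∑ y, π x y * Real.log (π x y / πref x y) else 0)) : ℝ) : EReal) := by
    intro π hπ hac
    have hterm : ∀ x, (ρ x : EReal) * klE (π x) (πref x) =
        ((ρ x * (if ∀ y, πref x y = 0 → π x y = 0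
          then ∑ y, π x y * Real.log (π x y / πref x y) else 0) : ℝ) : EReal) := by
      intro x
      by_cases h : ∀ y, πref x y = 0 → π x y = 0
      · simp only [klE]
        rw [if_pos h, if_pos h, EReal.coe_mul]
      · have hρ0 : ρ x = 0 := by
          by_contra hne
          exact h (hac x ((hρ.1 x).lt_of_ne' hne))
        simp only [klE]
        rw [if_neg h, if_neg h, hρ0]
        simp
    simp only [Jobj]
    rw [Finset.sum_congr rfl (fun x _ => hterm x), ← ereal_coe_sum, ← EReal.coe_mul,
      ← EReal.coe_sub]
    norm_cast
    rw [Finset.mul_sum, ← Finset.sum_sub_distrib]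
    refine Finset.sum_congr rfl fun x _ => ?_
    ring
  have hACr : ∀ x y, πref x y = 0 → πr x y = 0 := fun x y h => (hπr_zero x y).mp h
  -- value of the objective at the Gibbs policy
  have hJr : Jobj ρ πref r β πr = (C : EReal) := by
    rw [hval πr hπr_pol (fun x _ => hACr x)]
    norm_cast
    rw [hC]
    refine Finset.sum_congr rfl fun x _ => ?_
    rw [if_pos (hACr x)]
    congr 1
    have h := key x (πr x) (hπr_pol x) (hACr x)
    rw [hklself x, mul_zero, sub_zero] at h
    exact h
  -- per-prompt comparison in the absolutely continuous case
  have hterm_le : ∀ π : X → Y → ℝ, IsPolicy π →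
      (∀ x, 0 < ρ x → ∀ y, πref x y = 0 → π x y = 0) →
      ∀ x, ρ x * ((∑ y, π x y * r x y) -
        β * (if ∀ y, πref x y = 0 → π x y = 0
          then ∑ y, π x y * Real.log (π x y / πref x y) else 0))
        ≤ ρ x * (β * Real.log (Z x)) := by
    intro π hπ hac x
    rcases eq_or_lt_of_le (hρ.1 x) with h0 | hρx
    · rw [← h0]; simp
    · have hACx := hac x hρx
      rw [if_pos hACx]
      refine mul_le_mul_of_nonneg_left ?_ hρx.le
      rw [key x (π x) (hπ x) hACx]
      have hklr : 0 ≤ ∑ y, π x y * Real.log (π x y / πr x y) :=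
        kl_nonneg (π x) (πr x) (hπ x) (hπr_pol x)
          (fun y h => hACx y ((hπr_zero x y).mpr h))
      nlinarith
  -- the objective is `⊥` if absolute continuity fails somewhere relevant
  have hbot : ∀ π : X → Y → ℝ, IsPolicy π →
      ¬(∀ x, 0 < ρ x → ∀ y, πref x y = 0 → π x y = 0) →
      Jobj ρ πref r β π = ⊥ := by
    intro π hπ hnac
    push_neg at hnac
    obtain ⟨x0, hx0, y0, hy1, hy2⟩ := hnac
    have hnot : ¬(∀ y, πref x0 y = 0 → π x0 y = 0) := fun h => hy2 (h y0 hy1)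
    have htop : klE (π x0) (πref x0) = ⊤ := by
      simp only [klE]
      rw [if_neg hnot]
    have hsumtop : ∑ x, (ρ x : EReal) * klE (π x) (πref x) = ⊤ := by
      have hnn : ∀ x ∈ Finset.univ, (0 : EReal) ≤ (ρ x : EReal) * klE (π x) (πref x) := by
        intro x _
        refine mul_nonneg (by exact_mod_cast hρ.1 x) ?_
        by_cases h : ∀ y, πref x y = 0 → π x y = 0
        · simp only [klE]
          rw [if_pos h]
          exact_mod_cast kl_nonneg (π x) (πref x) (hπ x) (href x) h
        · simp only [klE]
          rw [if_neg h]
          exact le_top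
      have h1 := Finset.single_le_sum hnn (Finset.mem_univ x0)
      rw [htop, EReal.coe_mul_top_of_pos hx0] at h1
      exact top_le_iff.mp h1
    simp only [Jobj]
    rw [hsumtop, EReal.coe_mul_top_of_pos hβ, sub_eq_add_neg, EReal.neg_top, EReal.add_bot]
  -- global inequality
  have hle : ∀ π : X → Y → ℝ, IsPolicy π → Jobj ρ πref r β π ≤ (C : EReal) := by
    intro π hπ
    by_cases hac : ∀ x, 0 < ρ x → ∀ y, πref x y = 0 → π x y = 0
    · rw [hval π hπ hac, EReal.coe_le_coe_iff, hC]
      exact Finset.sum_le_sum fun x _ => hterm_le π hπ hac x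
    · rw [hbot π hπ hac]
      exact bot_le
  refine ⟨fun π hπ => (hle π hπ).trans_eq hJr.symm, ?_⟩
  -- uniqueness
  intro π hπ hmax x hρx
  have hJπ : Jobj ρ πref r β π = (C : EReal) :=
    le_antisymm (hle π hπ) (hJr ▸ hmax πr hπr_pol)
  have hac : ∀ x', 0 < ρ x' → ∀ y, πref x' y = 0 → π x' y = 0 := by
    by_contra hnac
    rw [hbot π hπ hnac] at hJπ
    exact (EReal.bot_ne_coe C) hJπ
  have hreal : ∑ x', ρ x' * ((∑ y, π x' y * r x' y) -
      β * (if ∀ y, πref x' y = 0 → π x' y = 0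
        then ∑ y, π x' y * Real.log (π x' y / πref x' y) else 0))
      = ∑ x', ρ x' * (β * Real.log (Z x')) := by
    have h := (hval π hπ hac).symm.trans hJπ
    rw [hC] at h
    exact_mod_cast h
  have hall := (Finset.sum_eq_sum_iff_of_le
    (fun x' _ => hterm_le π hπ hac x')).mp hreal x (Finset.mem_univ x)
  -- extract equality at x
  have hACx := hac x hρx
  rw [if_pos hACx] at hall
  have hV : (∑ y, π x y * r x y) -
      β * ∑ y, π x y * Real.log (π x y / πref x y) = β * Real.log (Z x) :=
    mul_left_cancel₀ hρx.ne' hall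
  rw [key x (π x) (hπ x) hACx] at hV
  have hkl0 : ∑ y, π x y * Real.log (π x y / πr x y) = 0 := by
    have := mul_left_cancel₀ hβ.ne' (by linarith : β * ∑ y, π x y * Real.log (π x y / πr x y) = β * 0)
    linarith [this]
  have hfun : π x = πr x := by
    by_contra hne
    have hklpos := kl_pos (π x) (πr x) (hπ x) (hπr_pol x)
      (fun y h => hACx y ((hπr_zero x y).mpr h)) hne
    linarith
  intro y
  exact congrFun hfun y
end

section
/- For every ε > 0 and every p ∈ (0,1), there exist probability distributions π and π_ref on a two-element set {a, b} with π(a) = p and π_ref(a) > 0, such that KL(π‖π_ref) ≤ ε and π(a)/π_ref(a) = exp(ε/p). In particular, a bound of ε on the reverse KL divergence to π_ref permits a density ratio as large as exp(ε/π(y)). -/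
open scoped BigOperators

/-- A bound `ε` on the reverse KL still permits an exponentially large density ratio:
for every `ε > 0` and `p ∈ (0,1)` there are distributions `π, π_ref` on a two-element
set with `π(a) = p`, `π_ref(a) > 0`, `KL(π‖π_ref) ≤ ε`, and
`π(a)/π_ref(a) = exp(ε/p)`. -/
theorem reverse_kl_allows_exponential_ratio
    (ε p : ℝ) (hε : 0 < ε) (hp0 : 0 < p) (hp1 : p < 1) :
    ∃ π πref : Fin 2 → ℝ, IsDist π ∧ IsDist πref ∧
      π 0 = p ∧ 0 < πref 0 ∧
      klE π πref ≤ (ε : EReal) ∧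
      π 0 / πref 0 = Real.exp (ε / p) := by
  set r : ℝ := Real.exp (-(ε / p)) with hr
  have hr0 : 0 < r := Real.exp_pos _
  have hr1 : r < 1 := by
    rw [hr, Real.exp_lt_one_iff]
    have : 0 < ε / p := div_pos hε hp0
    linarith
  have hpr : p * r < p := by nlinarith
  refine ⟨![p, 1 - p], ![p * r, 1 - p * r], ?_, ?_, ?_, ?_, ?_, ?_⟩
  · constructor
    · intro y; fin_cases y <;> simp <;> linarith
    · simp [Fin.sum_univ_two]
  · constructor
    · intro y; fin_cases y <;> simp
      · positivity
      · nlinarith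
    · simp [Fin.sum_univ_two]
  · simp
  · simp; positivity
  · have hq0 : (0:ℝ) < p * r := by positivity
    have hq1 : (0:ℝ) < 1 - p * r := by nlinarith
    rw [klE]
    rw [if_pos]
    · rw [EReal.coe_le_coe_iff]
      rw [Fin.sum_univ_two]
      simp only [Matrix.cons_val_zero, Matrix.cons_val_one, Matrix.head_cons]
      have h1 : p / (p * r) = Real.exp (ε / p) := by
        rw [hr, Real.exp_neg]
        field_simp
      have h2 : p * Real.log (p / (p * r)) = ε := by
        rw [h1, Real.log_exp]
        field_simp
      have h3 : (1 - p) * Real.log ((1 - p) / (1 - p * r)) ≤ 0 := by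
        apply mul_nonpos_of_nonneg_of_nonpos
        · linarith
        · apply Real.log_nonpos
          · exact le_of_lt (div_pos (by linarith) hq1)
          · rw [div_le_one hq1]; nlinarith
      linarith
    · intro y h
      exfalso
      fin_cases y
      · simp at h; rcases h with h | h <;> linarith
      · simp at h; linarith
  · simp only [Matrix.cons_val_zero]
    rw [hr, Real.exp_neg]
    field_simp
end
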